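/- Let f : F_q^k → F_q^l be a surjective linear map, k ≥ b ≥ 1, t ≥ 1, and B the matrix with entries B_{u,v} = max(2t − b + 2 − d_b(u,v), 0) when f(u) ≠ f(v) and 0 otherwise. Then Σ_{u,v ∈ F_q^k} B_{u,v} ≥ q^k · ((2t − b + 2)(q^k − q^{k−l}) − k(q^k − q^{k−b}) + s), where s = Σ_{u ∈ ker f} w_b(u). -/

import Mathlib

open Finset

/-- The b-symbol read vector of `u`: the length-`k` vector of cyclic windows of length `b`. -/
def piB (F : Type*) (k b : ℕ) (u : Fin k → F) : Fin k → (Fin b → F) :=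
  fun i j => u ⟨(i.val + j.val) % k, Nat.mod_lt _ i.pos⟩

/-- The b-symbol distance between `u` and `v`. -/
def dB (F : Type*) [DecidableEq F] (k b : ℕ) (u v : Fin k → F) : ℕ :=
  hammingDist (piB F k b u) (piB F k b v)

/-- The b-symbol weight of `u`: the number of nonzero cyclic windows of length `b`. -/
def wB (F : Type*) [DecidableEq F] [Zero F] (k b : ℕ) (u : Fin k → F) : ℕ :=
  (Finset.univ.filter (fun i : Fin k => piB F k b u i ≠ 0)).card

/-- The matrix `B_f^{(1)}(t)` with entries `[2t - b + 2 - d_b(u,v)]^+` when `f u ≠ f v`, else 0. -/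
def Bmat (F : Type*) [DecidableEq F] {α : Type*} [DecidableEq α] (k b t : ℕ)
    (f : (Fin k → F) → α) (u v : Fin k → F) : ℤ :=
  if f u ≠ f v then max (2 * (t : ℤ) - b + 2 - dB F k b u v) 0 else 0

section Aux

variable {F : Type*} [Field F] [Fintype F] [DecidableEq F] {k b : ℕ}

lemma piB_sub (u v : Fin k → F) : piB F k b (u - v) = piB F k b u - piB F k b v := by
  funext i j; simp [piB]

lemma wB_eq_norm (u : Fin k → F) : wB F k b u = hammingNorm (piB F k b u) := rfl

lemma dB_eq_wB (u v : Fin k → F) : dB F k b u v = wB F k b (u - v) := by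
  rw [dB, hammingDist_comm, hammingDist_eq_hammingNorm, wB_eq_norm, piB_sub, neg_add_eq_sub]

/-- counting functions vanishing on the image of an injection -/
lemma card_ann (σ : Fin b → Fin k) (hσ : Function.Injective σ) :
    (Finset.univ.filter fun w : Fin k → F => ∀ j, w (σ j) = 0).card
      = Fintype.card F ^ (k - b) := by
  rw [← Fintype.card_subtype]
  have e : {w : Fin k → F // ∀ j, w (σ j) = 0} ≃ ({x : Fin k // x ∉ Set.range σ} → F) :=
    { toFun := fun w x => w.1 x.1
      invFun := fun g =>
        ⟨fun x => if h : x ∈ Set.range σ then 0 else g ⟨x, h⟩, by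
          intro j
          simp [Set.mem_range]⟩
      left_inv := by
        rintro ⟨w, hw⟩
        ext x
        by_cases h : x ∈ Set.range σ
        · obtain ⟨j, rfl⟩ := h
          simp [hw j]
        · simp [h]
      right_inv := by
        intro g
        funext x
        simp [x.2] }
  rw [Fintype.card_congr e, Fintype.card_fun]
  congr 1
  rw [Fintype.card_subtype_compl, Fintype.card_fin]
  congr 1
  rw [Set.card_range_of_injective hσ, Fintype.card_fin]

end Aux

section Aux2
set_option linter.unusedSectionVars false
variable {F : Type*} [Field F] [Fintype F] [DecidableEq F] {k b : ℕ}

lemma window_inj (hbk : b ≤ k) (i : Fin k) :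
    Function.Injective (fun j : Fin b => (⟨(i.val + j.val) % k, Nat.mod_lt _ i.pos⟩ : Fin k)) := by
  intro j1 j2 h
  simp only [Fin.mk.injEq] at h
  have h1 : j1.val % k = j2.val % k := Nat.ModEq.add_left_cancel' i.val h
  rw [Nat.mod_eq_of_lt (lt_of_lt_of_le j1.2 hbk), Nat.mod_eq_of_lt (lt_of_lt_of_le j2.2 hbk)] at h1
  exact Fin.ext h1

lemma card_piB_zero (hbk : b ≤ k) (i : Fin k) :
    (Finset.univ.filter fun w : Fin k → F => piB F k b w i = 0).card
      = Fintype.card F ^ (k - b) := by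
  rw [← card_ann _ (window_inj hbk i)]
  congr 1
  apply Finset.filter_congr
  intro w _
  simp only [piB, funext_iff]
  rfl

lemma sum_wB (hbk : b ≤ k) (hq : Fintype.card F = q) :
    ∑ w : Fin k → F, (wB F k b w : ℤ) = k * ((q:ℤ)^k - (q:ℤ)^(k-b)) := by
  have hcard : Fintype.card (Fin k → F) = q ^ k := by
    rw [Fintype.card_fun, hq, Fintype.card_fin]
  have h1 : ∀ w : Fin k → F, (wB F k b w : ℤ)
      = ∑ i : Fin k, if piB F k b w i ≠ 0 then (1:ℤ) else 0 := by
    intro w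
    rw [wB, Finset.card_filter]
    push_cast
    rfl
  simp only [h1]
  rw [Finset.sum_comm]
  have h2 : ∀ i : Fin k, (∑ w : Fin k → F, if piB F k b w i ≠ 0 then (1:ℤ) else 0)
      = (q:ℤ)^k - (q:ℤ)^(k-b) := by
    intro i
    have hq1 : 1 ≤ q := hq ▸ Fintype.card_pos
    have hle : q ^ (k - b) ≤ q ^ k := Nat.pow_le_pow_right hq1 (Nat.sub_le k b)
    have hn : (Finset.univ.filter fun w : Fin k → F => piB F k b w i ≠ 0).card
        = q ^ k - q ^ (k - b) := by
      rw [Finset.filter_not, Finset.card_sdiff_of_subset (Finset.filter_subset _ _),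
        card_piB_zero hbk i, Finset.card_univ, hcard, hq]
    rw [Finset.sum_boole, hn, Nat.cast_sub hle]
    push_cast
    ring
  simp only [h2, Finset.sum_const, Finset.card_univ, Fintype.card_fin, nsmul_eq_mul]
end Aux2

section Aux3
set_option linter.unusedSectionVars false
variable {F : Type*} [Field F] [Fintype F] [DecidableEq F] {k l q : ℕ}

lemma card_ker_filter (hq : Fintype.card F = q)
    (f : (Fin k → F) →ₗ[F] (Fin l → F)) (hf : Function.Surjective f) :
    (Finset.univ.filter fun u : Fin k → F => f u = 0).card = q ^ (k - l) := by
  classical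
  have hfin : Module.finrank F (LinearMap.ker f) = k - l := by
    have h1 := LinearMap.finrank_range_add_finrank_ker f
    rw [LinearMap.range_eq_top.mpr hf, finrank_top, Module.finrank_fin_fun,
      Module.finrank_fin_fun] at h1
    omega
  have : Fintype ↥(LinearMap.ker f) := Fintype.ofFinite _
  have hc : Fintype.card ↥(LinearMap.ker f) = q ^ (k - l) := by
    rw [Module.card_eq_pow_finrank (K := F), hq, hfin]
  rw [← Fintype.card_subtype, ← hc]
  exact Fintype.card_congr (Equiv.subtypeEquivRight fun x => (LinearMap.mem_ker).symm)

end Aux3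


theorem Bmat_total_sum_lower_bound (F : Type*) [Field F] [Fintype F] [DecidableEq F]
    (q k l b t : ℕ) (hq : Fintype.card F = q) (hb : 1 ≤ b) (hbk : b ≤ k) (ht : 1 ≤ t)
    (f : (Fin k → F) →ₗ[F] (Fin l → F)) (hf : Function.Surjective f) :
    (∑ u : Fin k → F, ∑ v : Fin k → F, Bmat F k b t f u v) ≥
      (q : ℤ) ^ k * ((2 * (t : ℤ) - b + 2) * ((q : ℤ) ^ k - (q : ℤ) ^ (k - l))
        - (k : ℤ) * ((q : ℤ) ^ k - (q : ℤ) ^ (k - b))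
        + ∑ u ∈ Finset.univ.filter (fun u : Fin k → F => f u = 0), (wB F k b u : ℤ)) := by
  classical
  have hcard : Fintype.card (Fin k → F) = q ^ k := by
    rw [Fintype.card_fun, hq, Fintype.card_fin]
  set M : ℤ := 2 * (t : ℤ) - b + 2 with hM
  set s : ℤ := ∑ u ∈ Finset.univ.filter (fun u : Fin k → F => f u = 0), (wB F k b u : ℤ)
    with hs
  have step1 : ∀ u v : Fin k → F,
      (if f u = f v then 0 else M - dB F k b u v) ≤ Bmat F k b t f u v := by
    intro u v
    by_cases h : f u = f v
    · simp [Bmat, h]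
    · simp only [Bmat, h, ne_eq, not_false_eq_true, if_true, if_neg h]
      exact le_max_left _ _
  have hA : ∀ u : Fin k → F, ∑ v : Fin k → F, (M - (dB F k b u v : ℤ))
      = (q:ℤ)^k * M - (k:ℤ) * ((q:ℤ)^k - (q:ℤ)^(k-b)) := by
    intro u
    have hd : ∑ v : Fin k → F, (dB F k b u v : ℤ) = ∑ w : Fin k → F, (wB F k b w : ℤ) :=
      Fintype.sum_equiv (Equiv.subLeft u) _ _ (fun v => by rw [dB_eq_wB]; rfl)
    rw [Finset.sum_sub_distrib, hd, sum_wB hbk hq, Finset.sum_const, Finset.card_univ, hcard]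
    push_cast
    ring
  have hB : ∀ u : Fin k → F,
      ∑ v : Fin k → F, (if f u = f v then M - (dB F k b u v : ℤ) else 0)
      = (q:ℤ)^(k-l) * M - s := by
    intro u
    rw [← Finset.sum_filter]
    have hbij : ∑ v ∈ Finset.univ.filter (fun v : Fin k → F => f u = f v),
        (M - (dB F k b u v : ℤ))
        = ∑ z ∈ Finset.univ.filter (fun z : Fin k → F => f z = 0),
        (M - (wB F k b z : ℤ)) := by
      refine Finset.sum_nbij' (fun v => u - v) (fun z => u - z) ?_ ?_ ?_ ?_ ?_
      · intro v hv
        simp only [Finset.mem_filter, Finset.mem_univ, true_and] at hv ⊢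
        rw [map_sub, ← hv, sub_self]
      · intro z hz
        simp only [Finset.mem_filter, Finset.mem_univ, true_and] at hz ⊢
        rw [map_sub, hz, sub_zero]
      · intro v _; module
      · intro z _; module
      · intro v _; rw [dB_eq_wB]
    rw [hbij, Finset.sum_sub_distrib, Finset.sum_const, card_ker_filter hq f hf, ← hs]
    push_cast
    ring
  have split : ∀ u v : Fin k → F, (if f u = f v then 0 else M - (dB F k b u v : ℤ))
      = (M - (dB F k b u v : ℤ)) - (if f u = f v then M - (dB F k b u v : ℤ) else 0) := by
    intro u v; split_ifs <;> ring
  have step2 : ∑ u : Fin k → F, ∑ v : Fin k → F,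
      (if f u = f v then 0 else M - (dB F k b u v : ℤ))
      = (q:ℤ)^k * (M * ((q:ℤ)^k - (q:ℤ)^(k-l)) - (k:ℤ) * ((q:ℤ)^k - (q:ℤ)^(k-b)) + s) := by
    have : ∀ u : Fin k → F, ∑ v : Fin k → F,
        (if f u = f v then 0 else M - (dB F k b u v : ℤ))
        = (q:ℤ)^k * M - (k:ℤ) * ((q:ℤ)^k - (q:ℤ)^(k-b)) - ((q:ℤ)^(k-l) * M - s) := by
      intro u
      simp only [split]
      rw [Finset.sum_sub_distrib, hA u, hB u]
    simp only [this, Finset.sum_const, Finset.card_univ, hcard, nsmul_eq_mul]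
    push_cast
    ring
  calc (q : ℤ) ^ k * (M * ((q : ℤ) ^ k - (q : ℤ) ^ (k - l))
        - (k : ℤ) * ((q : ℤ) ^ k - (q : ℤ) ^ (k - b)) + s)
      = ∑ u : Fin k → F, ∑ v : Fin k → F,
        (if f u = f v then 0 else M - (dB F k b u v : ℤ)) := step2.symm
    _ ≤ ∑ u : Fin k → F, ∑ v : Fin k → F, Bmat F k b t f u v :=
        Finset.sum_le_sum fun u _ => Finset.sum_le_sum fun v _ => step1 u v
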